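/- (Menas, one direction) Let ω₁ ⊆ W ⊆ W' be sets and X ⊆ [W]^ω. If X is stationary in [W]^ω, then the set {x' ∈ [W']^ω : x' ∩ W ∈ X} is stationary in [W']^ω. -/

import Mathlib

open Set Cardinal

noncomputable def omega1 : Ordinal := (Cardinal.aleph 1).ord

noncomputable def omega2 : Ordinal := (Cardinal.aleph 2).ord

/-- `[W]^ω`: the countable subsets of `W`. -/
def ctble (W : Set Ordinal) : Set (Set Ordinal) := {x | x ⊆ W ∧ x.Countable}

/-- `Z` is club in `[W]^ω`: `Z ⊆ [W]^ω`, `Z` is `⊆`-cofinal in `[W]^ω`, and `Z` is closed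
under unions of `⊆`-increasing `ω`-chains of its elements. -/
def IsClubW (W : Set Ordinal) (Z : Set (Set Ordinal)) : Prop :=
  Z ⊆ ctble W ∧
  (∀ x ∈ ctble W, ∃ z ∈ Z, x ⊆ z) ∧
  (∀ c : ℕ → Set Ordinal, (∀ n, c n ∈ Z) → (∀ n, c n ⊆ c (n + 1)) → (⋃ n, c n) ∈ Z)

/-- `X` is stationary in `[W]^ω`: `X` meets every club subset of `[W]^ω`. -/
def IsStat (W : Set Ordinal) (X : Set (Set Ordinal)) : Prop :=
  ∀ Z, IsClubW W Z → (X ∩ Z).Nonempty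

/-- `X` is non-stationary in `[W]^ω`: `X` is disjoint from some club subset of `[W]^ω`. -/
def NonStat (W : Set Ordinal) (X : Set (Set Ordinal)) : Prop :=
  ∃ Z, IsClubW W Z ∧ X ∩ Z = ∅

open Classical in
/-- Pick an element of `Z'` containing `S`, if one exists. -/
noncomputable def pick (Z' : Set (Set Ordinal)) (S : Set Ordinal) : Set Ordinal :=
  if h : ∃ z ∈ Z', S ⊆ z then h.choose else ∅

lemma pick_spec {Z' : Set (Set Ordinal)} {S : Set Ordinal} (h : ∃ z ∈ Z', S ⊆ z) :
    pick Z' S ∈ Z' ∧ S ⊆ pick Z' S := by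
  classical
  rw [pick, dif_pos h]
  exact ⟨h.choose_spec.1, h.choose_spec.2⟩

/-- An auxiliary hierarchy of functions from finite sets into `Z'`. -/
noncomputable def G (Z' : Set (Set Ordinal)) (W' : Set Ordinal) :
    ℕ → Finset Ordinal → Set Ordinal
  | 0, e => pick Z' (↑e ∩ W')
  | (n+1), e => pick Z' ((↑e ∩ W') ∪ ⋃ a ∈ (e : Set Ordinal), G Z' W' n (e.erase a))

lemma G_spec {Z' : Set (Set Ordinal)} {W' : Set Ordinal}
    (hsub : Z' ⊆ ctble W') (hcof : ∀ x ∈ ctble W', ∃ z ∈ Z', x ⊆ z) :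
    ∀ n e, G Z' W' n e ∈ Z' ∧ (↑e ∩ W') ⊆ G Z' W' n e ∧
      (∀ m, n = m + 1 → ∀ a ∈ e, G Z' W' m (e.erase a) ⊆ G Z' W' n e) := by
  intro n
  induction n with
  | zero =>
    intro e
    have hmem : (↑e ∩ W') ∈ ctble W' :=
      ⟨inter_subset_right, ((e.finite_toSet).subset inter_subset_left).countable⟩
    obtain ⟨h1, h2⟩ := pick_spec (hcof _ hmem)
    exact ⟨h1, h2, fun m hm => by omega⟩
  | succ n ih =>
    intro e
    set S : Set Ordinal := (↑e ∩ W') ∪ ⋃ a ∈ (e : Set Ordinal), G Z' W' n (e.erase a) with hS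
    have hmem : S ∈ ctble W' := by
      constructor
      · apply union_subset inter_subset_right
        exact iUnion₂_subset fun a _ => (hsub (ih (e.erase a)).1).1
      · apply Countable.union ((e.finite_toSet).subset inter_subset_left).countable
        exact Countable.biUnion (e.countable_toSet) fun a _ => (hsub (ih (e.erase a)).1).2
    obtain ⟨h1, h2⟩ := pick_spec (hcof _ hmem)
    refine ⟨h1, (subset_union_left).trans h2, ?_⟩
    intro m hm a ha
    have hmn : m = n := by omega
    subst hmn
    exact (subset_union_right.trans h2).trans' (subset_iUnion₂_of_subset a ha subset_rfl)

/-- The "monotone closure" function: `F e` is an element of `Z'` containing `e ∩ W'`,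
monotone in `e`. -/
noncomputable def Fc (Z' : Set (Set Ordinal)) (W' : Set Ordinal) (e : Finset Ordinal) :
    Set Ordinal := G Z' W' e.card e

lemma Fc_mem {Z' : Set (Set Ordinal)} {W' : Set Ordinal}
    (hsub : Z' ⊆ ctble W') (hcof : ∀ x ∈ ctble W', ∃ z ∈ Z', x ⊆ z)
    (e : Finset Ordinal) : Fc Z' W' e ∈ Z' :=
  (G_spec hsub hcof e.card e).1

lemma Fc_supset {Z' : Set (Set Ordinal)} {W' : Set Ordinal}
    (hsub : Z' ⊆ ctble W') (hcof : ∀ x ∈ ctble W', ∃ z ∈ Z', x ⊆ z)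
    (e : Finset Ordinal) : (↑e ∩ W') ⊆ Fc Z' W' e :=
  (G_spec hsub hcof e.card e).2.1

lemma Fc_mono {Z' : Set (Set Ordinal)} {W' : Set Ordinal}
    (hsub : Z' ⊆ ctble W') (hcof : ∀ x ∈ ctble W', ∃ z ∈ Z', x ⊆ z) :
    ∀ n (e e' : Finset Ordinal), e.card ≤ n → e' ⊆ e → Fc Z' W' e' ⊆ Fc Z' W' e := by
  intro n
  induction n with
  | zero =>
    intro e e' hc hss
    have : e = ∅ := Finset.card_eq_zero.mp (by omega)
    subst this
    rw [Finset.subset_empty.mp hss]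
  | succ n ih =>
    intro e e' hc hss
    rcases eq_or_ne e' e with rfl | hne
    · exact subset_rfl
    · obtain ⟨a, hae, hae'⟩ := Finset.exists_of_ssubset (lt_of_le_of_ne hss hne)
      have hsse : e' ⊆ e.erase a := fun b hb =>
        Finset.mem_erase.mpr ⟨fun h => hae' (h ▸ hb), hss hb⟩
      have hcard : (e.erase a).card = e.card - 1 := Finset.card_erase_of_mem hae
      have h1 : Fc Z' W' e' ⊆ Fc Z' W' (e.erase a) :=
        ih (e.erase a) e' (by omega) hsse
      have hcpos : 1 ≤ e.card := Finset.card_pos.mpr ⟨a, hae⟩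
      have h2 : Fc Z' W' (e.erase a) ⊆ Fc Z' W' e := by
        have := (G_spec hsub hcof e.card e).2.2 (e.card - 1) (by omega) a hae
        unfold Fc
        rw [hcard]
        exact this
      exact h1.trans h2

lemma finset_subset_chain {c : ℕ → Set Ordinal} (hc : ∀ n, c n ⊆ c (n + 1))
    (e : Finset Ordinal) (h : ↑e ⊆ ⋃ n, c n) : ∃ n, ↑e ⊆ c n := by
  have hmono : Monotone c := monotone_nat_of_le_succ hc
  classical
  induction e using Finset.induction_on with
  | empty => exact ⟨0, by simp⟩
  | @insert a s ha ih =>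
    have hsub : (↑s : Set Ordinal) ⊆ ⋃ n, c n := fun b hb => h (by simp [hb])
    obtain ⟨n, hn⟩ := ih hsub
    have haU : a ∈ ⋃ n, c n := h (by simp)
    obtain ⟨m, hm⟩ := mem_iUnion.mp haU
    refine ⟨max n m, ?_⟩
    rw [Finset.coe_insert]
    rintro b hb
    rcases hb with rfl | hb
    · exact hmono (le_max_right n m) hm
    · exact hmono (le_max_left n m) (hn hb)

theorem stmt3 (W W' : Set Ordinal) (hW : Set.Iio omega1 ⊆ W) (hWW' : W ⊆ W')
    (X : Set (Set Ordinal)) (hX : X ⊆ ctble W) (hstat : IsStat W X) :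
    IsStat W' {x' | x' ∈ ctble W' ∧ x' ∩ W ∈ X} := by
  intro Z' hZ'
  obtain ⟨hsub, hcof, hchain⟩ := hZ'
  set F : Finset Ordinal → Set Ordinal := Fc Z' W' with hF
  have hF1 : ∀ e, F e ∈ Z' := Fc_mem hsub hcof
  have hF2 : ∀ e : Finset Ordinal, (↑e ∩ W') ⊆ F e := Fc_supset hsub hcof
  have hF3 : ∀ e e' : Finset Ordinal, e' ⊆ e → F e' ⊆ F e :=
    fun e e' h => Fc_mono hsub hcof e.card e e' le_rfl h
  -- projected club
  set CG : Set (Set Ordinal) :=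
    {x | x ∈ ctble W ∧ ∀ e : Finset Ordinal, ↑e ⊆ x → F e ∩ W ⊆ x} with hCG
  have hclub : IsClubW W CG := by
    refine ⟨fun x hx => hx.1, ?_, ?_⟩
    · -- cofinal
      intro x hx
      set c : ℕ → Set Ordinal := fun n =>
        Nat.rec x (fun _ cn => cn ∪ ⋃ e ∈ {e : Finset Ordinal | ↑e ⊆ cn}, (F e ∩ W)) n with hc
      have hcsucc : ∀ n, c (n + 1) = c n ∪ ⋃ e ∈ {e : Finset Ordinal | ↑e ⊆ c n}, (F e ∩ W) :=
        fun n => rfl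
      have hcchain : ∀ n, c n ⊆ c (n + 1) := fun n => by
        rw [hcsucc]; exact subset_union_left
      have hcmem : ∀ n, c n ∈ ctble W := by
        intro n
        induction n with
        | zero => exact hx
        | succ n ih =>
          rw [hcsucc]
          constructor
          · apply union_subset ih.1
            exact iUnion₂_subset fun e _ => inter_subset_right
          · apply Countable.union ih.2
            apply Countable.biUnion
            · -- finsets with coe inside countable set
              have h1 : {t : Set Ordinal | Set.Finite t ∧ t ⊆ c n}.Countable :=
                countable_setOf_finite_subset ih.2
              have h2 : {e : Finset Ordinal | ↑e ⊆ c n}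
                  ⊆ (fun t : Finset Ordinal => (↑t : Set Ordinal)) ⁻¹'
                    {t | Set.Finite t ∧ t ⊆ c n} := by
                intro e he
                exact ⟨e.finite_toSet, he⟩
              exact (h1.preimage (fun a b hab => Finset.coe_injective hab)).mono h2
            · exact fun e _ => ((hsub (hF1 e)).2).mono inter_subset_left
      refine ⟨⋃ n, c n, ⟨⟨iUnion_subset fun n => (hcmem n).1,
        countable_iUnion fun n => (hcmem n).2⟩, ?_⟩, subset_iUnion_of_subset 0 subset_rfl⟩
      intro e he
      obtain ⟨n, hn⟩ := finset_subset_chain hcchain e he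
      refine subset_iUnion_of_subset (n + 1) ?_
      rw [hcsucc]
      exact (subset_biUnion_of_mem (u := fun e => F e ∩ W) hn).trans subset_union_right
    · -- chain closed
      intro c hcZ hcchain
      refine ⟨⟨iUnion_subset fun n => (hcZ n).1.1,
        countable_iUnion fun n => (hcZ n).1.2⟩, ?_⟩
      intro e he
      obtain ⟨n, hn⟩ := finset_subset_chain hcchain e he
      exact ((hcZ n).2 e hn).trans (subset_iUnion_of_subset n subset_rfl)
  obtain ⟨x, hxX, hxCG⟩ := hstat CG hclub
  obtain ⟨hxct, hxcl⟩ := hxCG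
  rcases eq_empty_or_nonempty x with rfl | hne
  · -- empty case
    refine ⟨F ∅, ⟨hsub (hF1 ∅), ?_⟩, hF1 ∅⟩
    have : F ∅ ∩ W = (∅ : Set Ordinal) :=
      subset_empty_iff.mp (hxcl ∅ (by simp))
    rw [this] at *
    exact hxX
  · -- nonempty case: enumerate x
    obtain ⟨f, hf⟩ := hxct.2.exists_eq_range hne
    set e : ℕ → Finset Ordinal := fun n => (Finset.range (n + 1)).image f with he
    have hech : ∀ n, e n ⊆ e (n + 1) := fun n =>
      Finset.image_subset_image (Finset.range_subset_range.mpr (by omega))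
    have hex : ∀ n, (↑(e n) : Set Ordinal) ⊆ x := by
      intro n a ha
      simp only [he, Finset.coe_image, Finset.coe_range] at ha
      obtain ⟨k, _, rfl⟩ := ha
      rw [hf]; exact mem_range_self k
    set z : Set Ordinal := ⋃ n, F (e n) with hz
    have hzZ : z ∈ Z' := hchain _ (fun n => hF1 (e n)) (fun n => hF3 _ _ (hech n))
    have hzW : z ∩ W = x := by
      apply Subset.antisymm
      · rintro a ⟨haz, haW⟩
        obtain ⟨n, hn⟩ := mem_iUnion.mp haz
        exact hxcl (e n) (hex n) ⟨hn, haW⟩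
      · intro a ha
        have hax : a ∈ range f := hf ▸ ha
        obtain ⟨k, rfl⟩ := hax
        have haW : f k ∈ W := hxct.1 ha
        have h1 : f k ∈ (↑(e k) : Set Ordinal) :=
          Finset.mem_coe.mpr (Finset.mem_image.mpr ⟨k, Finset.mem_range.mpr (by omega), rfl⟩)
        exact ⟨mem_iUnion.mpr ⟨k, hF2 (e k) ⟨h1, hWW' haW⟩⟩, haW⟩
    exact ⟨z, ⟨hsub hzZ, hzW ▸ hxX⟩, hzZ⟩
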